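/- Let p2, p3, p4 ∈ ℂ[v,y] ⊂ S, q2, q3, q4 ∈ ℂ[v] ⊂ S and k2, k3, k4 ∈ ℂ. Set E2 = (−y² + p2·t)∂_y + q2·t·∂_v + k2·t·∂_t, E3 = p3·t·∂_y + (1 + q3·t)∂_v + k3·t·∂_t and E4 = (−v·y² + p4·t)∂_y + q4·t·∂_v + k4·t·∂_t. If [E3,E4] ≡ E2 (mod t²), then k2 = 0 and ∂_v q4 + k3·q4 − k4·q3 = q2 in ℂ[v]. -/
import Mathlib


open MvPolynomial

noncomputable section

/-- `S = ℂ[v,y,t]` with `v = X 0`, `y = X 1`, `t = X 2`. -/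
abbrev S : Type := MvPolynomial (Fin 3) ℂ

/-- The variable `v`. -/ def V : S := X 0
/-- The variable `y`. -/ def Y : S := X 1
/-- The variable `t`. -/ def T : S := X 2

/-- The derivation `f ∂_y + g ∂_v + h ∂_t` of `S = ℂ[v,y,t]`, determined by
`y ↦ f`, `v ↦ g`, `t ↦ h`. -/
def der (f g h : S) : Derivation ℂ S S :=
  MvPolynomial.mkDerivation ℂ ![g, f, h]

/-- The inclusion `ℂ[v,y] ⊂ S` (where in `ℂ[v,y]` the variable `X 0` is `v`
and `X 1` is `y`). -/
def ι2 : MvPolynomial (Fin 2) ℂ →ₐ[ℂ] S := aeval ![V, Y]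

/-- The inclusion `ℂ[v] ⊂ S`. -/
def ι1 : Polynomial ℂ →ₐ[ℂ] S := Polynomial.aeval V

/-- `D ≡ D' (mod t²)`: the difference sends `y`, `v`, `t` into the ideal `(t²)`. -/
def ModT2 (D D' : Derivation ℂ S S) : Prop :=
  ∀ i : Fin 3, (D - D') (X i) ∈ Ideal.span {T ^ 2}


lemma der_V (f g h : S) : der f g h V = g := by
  simp [der, V, MvPolynomial.mkDerivation_X]

lemma der_T (f g h : S) : der f g h T = h := by
  simp [der, T, MvPolynomial.mkDerivation_X]

/-- Evaluation `S → ℂ[v]` killing `y` and `t`. -/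
def ev0 : S →ₐ[ℂ] Polynomial ℂ := aeval ![Polynomial.X, 0, 0]

lemma ev0_T : ev0 T = 0 := by simp [ev0, T]

lemma ev0_ι1 (q : Polynomial ℂ) : ev0 (ι1 q) = q := by
  show ev0 (Polynomial.aeval V q) = q
  rw [← Polynomial.aeval_algHom_apply]
  have : ev0 V = Polynomial.X := by simp [ev0, V]
  rw [this, Polynomial.aeval_X_left_apply]

lemma ev0_C (a : ℂ) : ev0 (C a) = Polynomial.C a := by
  simp [ev0, Polynomial.algebraMap_eq]

lemma cancelT (A : S) (hA : A * T ∈ Ideal.span {T ^ 2}) : ev0 A = 0 := by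
  obtain ⟨c, hc⟩ := Ideal.mem_span_singleton'.mp hA
  have hT : (T : S) ≠ 0 := MvPolynomial.X_ne_zero 2
  have : A = c * T := by
    apply mul_right_cancel₀ hT
    rw [← hc]; ring
  rw [this, map_mul, ev0_T, mul_zero]

theorem bracket_E3_E4 (p2 p3 p4 : MvPolynomial (Fin 2) ℂ) (q2 q3 q4 : Polynomial ℂ)
    (k2 k3 k4 : ℂ) (E2 E3 E4 : Derivation ℂ S S)
    (hE2 : E2 = der (-Y ^ 2 + ι2 p2 * T) (ι1 q2 * T) (C k2 * T))
    (hE3 : E3 = der (ι2 p3 * T) (1 + ι1 q3 * T) (C k3 * T))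
    (hE4 : E4 = der (-V * Y ^ 2 + ι2 p4 * T) (ι1 q4 * T) (C k4 * T))
    (h : ModT2 ⁅E3, E4⁆ E2) :
    k2 = 0 ∧
      Polynomial.derivative q4 + Polynomial.C k3 * q4 - Polynomial.C k4 * q3 = q2 := by
  have e3V : E3 V = 1 + ι1 q3 * T := by rw [hE3, der_V]
  have e3T : E3 T = C k3 * T := by rw [hE3, der_T]
  have e4V : E4 V = ι1 q4 * T := by rw [hE4, der_V]
  have e4T : E4 T = C k4 * T := by rw [hE4, der_T]
  have e3q : ∀ q : Polynomial ℂ, E3 (ι1 q) = ι1 (Polynomial.derivative q) * E3 V := by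
    intro q
    show E3 (Polynomial.aeval V q) = _
    rw [Derivation.map_aeval, smul_eq_mul]; rfl
  have e4q : ∀ q : Polynomial ℂ, E4 (ι1 q) = ι1 (Polynomial.derivative q) * E4 V := by
    intro q
    show E4 (Polynomial.aeval V q) = _
    rw [Derivation.map_aeval, smul_eq_mul]; rfl
  have key2 : (⁅E3, E4⁆ - E2) (X 2) = (-(C k2)) * T := by
    have : (⁅E3, E4⁆ - E2) (X 2) = E3 (E4 T) - E4 (E3 T) - E2 T := by
      rfl
    rw [this, e3T, e4T, hE2, der_T,
      show (C k4 * T : S) = k4 • T from (smul_eq_C_mul T k4).symm,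
      show (C k3 * T : S) = k3 • T from (smul_eq_C_mul T k3).symm,
      Derivation.map_smul, Derivation.map_smul, e3T, e4T, smul_eq_C_mul, smul_eq_C_mul]
    ring
  have hk2 : ev0 (-(C k2)) = 0 := cancelT _ (key2 ▸ h 2)
  rw [map_neg, ev0_C, neg_eq_zero, Polynomial.C_eq_zero] at hk2
  refine ⟨hk2, ?_⟩
  have A3 : E3 (ι1 q4 * T) =
      ι1 q4 * (C k3 * T) + T * (ι1 (Polynomial.derivative q4) * (1 + ι1 q3 * T)) := by
    rw [Derivation.leibniz, e3T, e3q q4, e3V, smul_eq_mul, smul_eq_mul]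
  have A4 : E4 (1 + ι1 q3 * T) =
      ι1 q3 * (C k4 * T) + T * (ι1 (Polynomial.derivative q3) * (ι1 q4 * T)) := by
    rw [map_add, Derivation.map_one_eq_zero, zero_add, Derivation.leibniz, e4T, e4q q3,
      e4V, smul_eq_mul, smul_eq_mul]
  have key0 : (⁅E3, E4⁆ - E2) (X 0) =
      (ι1 q4 * C k3 + ι1 (Polynomial.derivative q4) * (1 + ι1 q3 * T)
        - ι1 q3 * C k4 - ι1 (Polynomial.derivative q3) * (ι1 q4 * T) - ι1 q2) * T := by
    have : (⁅E3, E4⁆ - E2) (X 0) = E3 (E4 V) - E4 (E3 V) - E2 V := by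
      rfl
    rw [this, e4V, e3V, A3, A4, hE2, der_V]
    ring
  have hA := cancelT _ (key0 ▸ h 0)
  simp only [map_sub, map_add, map_mul, map_one, ev0_ι1, ev0_T, ev0_C, mul_zero,
    zero_mul, add_zero, mul_one] at hA
  linear_combination hA

end
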